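/- Let T be a laminar data set over an n × n strategy space that satisfies the uniqueness property and in which no two distinct observations have the same observed choice. Then there exists an acyclic revealed-preference graph G that strongly implements T. -/

import Mathlib

/-- An observation: an observed choice `(i,j)` together with a subgame `(I,J)`. -/
abbrev Obs (n : ℕ) := (Fin n × Fin n) × Finset (Fin n) × Finset (Fin n)

/-- `T` is a (well-formed) data set: each observed choice lies in its subgame. -/
def IsDataset {n : ℕ} (T : Finset (Obs n)) : Prop :=
  ∀ o ∈ T, o.1.1 ∈ o.2.1 ∧ o.1.2 ∈ o.2.2

/-- `(i,j)` is a strict Nash equilibrium of the subgame `(I,J)` of the bimatrix game `(A,B)`: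
`A i j > A i' j` for all other `i' ∈ I` and `B i j > B i j'` for all other `j' ∈ J`. -/
def StrictNash {n : ℕ} (A B : Matrix (Fin n) (Fin n) ℝ)
    (I J : Finset (Fin n)) (i j : Fin n) : Prop :=
  i ∈ I ∧ j ∈ J ∧ (∀ i' ∈ I, i' ≠ i → A i' j < A i j) ∧ (∀ j' ∈ J, j' ≠ j → B i j' < B i j)

/-- The bimatrix game `(A,B)` rationalizes the data set `T`: every observed choice is a
strict Nash equilibrium of its subgame. -/
def Rationalizes {n : ℕ} (A B : Matrix (Fin n) (Fin n) ℝ) (T : Finset (Obs n)) : Prop :=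
  ∀ o ∈ T, StrictNash A B o.2.1 o.2.2 o.1.1 o.1.2

/-- The data set `T` is rationalizable by some bimatrix game. -/
def Rationalizable {n : ℕ} (T : Finset (Obs n)) : Prop :=
  ∃ A B : Matrix (Fin n) (Fin n) ℝ, Rationalizes A B T

/-- Two subgames `(I,J)` and `(I',J')` cross: `(I×J) ∩ (I'×J') ≠ ∅` but neither product
set contains the other. -/
def Cross {n : ℕ} (S S' : Finset (Fin n) × Finset (Fin n)) : Prop :=
  ((S.1 ×ˢ S.2) ∩ (S'.1 ×ˢ S'.2)).Nonempty ∧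
    ¬ (S.1 ×ˢ S.2 ⊆ S'.1 ×ˢ S'.2) ∧ ¬ (S'.1 ×ˢ S'.2 ⊆ S.1 ×ˢ S.2)

/-- A data set is laminar if no two of its subgames cross. -/
def Laminar {n : ℕ} (T : Finset (Obs n)) : Prop :=
  ∀ o ∈ T, ∀ o' ∈ T, ¬ Cross o.2 o'.2

/-- The uniqueness property: every subgame appearing in `T` has exactly one observed choice,
and whenever `((i,j),I,J), ((i',j'),I',J') ∈ T` with `I'×J' ⊆ I×J` and `(i,j) ∈ I'×J'`,
then `(i',j') = (i,j)`. -/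
def UniqueProp {n : ℕ} (T : Finset (Obs n)) : Prop :=
  (∀ o ∈ T, ∀ o' ∈ T, o.2 = o'.2 → o.1 = o'.1) ∧
  (∀ o ∈ T, ∀ o' ∈ T, o'.2.1 ×ˢ o'.2.2 ⊆ o.2.1 ×ˢ o.2.2 →
      o.1 ∈ o'.2.1 ×ˢ o'.2.2 → o'.1 = o.1)

/-- A directed graph (given by its edge relation) has no directed cycle. -/
def Acyclic {V : Type*} (G : V → V → Prop) : Prop :=
  ∀ v, ¬ Relation.TransGen G v v

/-- A revealed-preference graph on vertex set `[n] × [n]`: every edge joins two profiles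
that agree in exactly one coordinate (column edges agree in the first coordinate, row
edges agree in the second). -/
def IsRPGraph {n : ℕ} (G : Fin n × Fin n → Fin n × Fin n → Prop) : Prop :=
  ∀ v w, G v w → (v.1 = w.1 ∧ v.2 ≠ w.2) ∨ (v.2 = w.2 ∧ v.1 ≠ w.1)

/-- `G` implements the data set `T`: for each observation `((i,j),I,J) ∈ T` it contains
the row edges from `(i,j)` to `(i',j)` for every other `i' ∈ I`, and the column edges
from `(i,j')` to `(i,j)` for every other `j' ∈ J`. -/
def Implements {n : ℕ} (G : Fin n × Fin n → Fin n × Fin n → Prop)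
    (T : Finset (Obs n)) : Prop :=
  ∀ o ∈ T, (∀ i' ∈ o.2.1, i' ≠ o.1.1 → G o.1 (i', o.1.2)) ∧
    (∀ j' ∈ o.2.2, j' ≠ o.1.2 → G (o.1.1, j') o.1)

/-- `G` strongly implements `T`: it implements `T` and, for each observation
`((i,j),I,J) ∈ T`, every profile `(i',j') ∈ I×J` other than `(i,j)` either has an
incoming row edge from some vertex in `I×J` or an outgoing column edge to some
vertex in `I×J`. -/
def StronglyImplements {n : ℕ} (G : Fin n × Fin n → Fin n × Fin n → Prop)
    (T : Finset (Obs n)) : Prop :=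
  Implements G T ∧
  ∀ o ∈ T, ∀ i' ∈ o.2.1, ∀ j' ∈ o.2.2, (i', j') ≠ o.1 →
    (∃ a ∈ o.2.1, a ≠ i' ∧ G (a, j') (i', j')) ∨
    (∃ b ∈ o.2.2, b ≠ j' ∧ G (i', j') (i', b))


section chains
variable {α : Type*} {r : α → α → Prop}

lemma chain_cons_iff {a b : α} {l : List α} :
    List.Chain r a (b :: l) ↔ r a b ∧ List.Chain r b l := List.isChain_cons_cons

lemma chain_split' {a b : α} {l₁ l₂ : List α} :
    List.Chain r a (l₁ ++ b :: l₂) ↔ List.Chain r a (l₁ ++ [b]) ∧ List.Chain r b l₂ :=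
  List.isChain_cons_split

lemma chain_last_tg :
    ∀ (l : List α) (a b : α), List.Chain r a l → l.getLast? = some b →
      Relation.TransGen r a b := by
  intro l
  induction l with
  | nil => intro a b _ h; simp at h
  | cons c l ih =>
    intro a b hc hl
    rw [chain_cons_iff] at hc
    cases l with
    | nil =>
      simp only [List.getLast?_singleton, Option.some.injEq] at hl
      subst hl; exact Relation.TransGen.single hc.1
    | cons d l' =>
      have h2 : (d :: l').getLast? = some b := by
        simpa [List.getLast?_cons_cons] using hl
      exact (Relation.TransGen.single hc.1).trans (ih _ _ hc.2 h2)

lemma chain_append_last :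
    ∀ (l : List α) (a b c : α), List.Chain r a l → l.getLast? = some b → r b c →
      List.Chain r a (l ++ [c]) := by
  intro l
  induction l with
  | nil => intro a b c _ h; simp at h
  | cons d l ih =>
    intro a b c hc hl hr
    rw [chain_cons_iff] at hc
    cases l with
    | nil =>
      simp only [List.getLast?_singleton, Option.some.injEq] at hl
      subst hl
      simp [chain_cons_iff, hc.1, hr, List.Chain.nil]
    | cons e l' =>
      have hl' : (e :: l').getLast? = some b := by
        simpa [List.getLast?_cons_cons] using hl
      have := ih d b c hc.2 hl' hr
      simpa [chain_cons_iff, hc.1] using this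

lemma getLast?_append_ne {l1 l2 : List α} (h : l2 ≠ []) :
    (l1 ++ l2).getLast? = l2.getLast? := by
  rw [List.getLast?_append, List.getLast?_eq_getLast (l := l2) h]; rfl

lemma tg_chain {a b : α} (h : Relation.TransGen r a b) :
    ∃ l : List α, l ≠ [] ∧ List.Chain r a l ∧ l.getLast? = some b := by
  induction h with
  | @single c h => exact ⟨[c], by simp, by simp [chain_cons_iff, h, List.Chain.nil], by simp⟩
  | tail h₁ h₂ ih =>
    obtain ⟨l, hne, hc, hl⟩ := ih
    exact ⟨l ++ [_], by simp, chain_append_last l _ _ _ hc hl h₂,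
      List.getLast?_concat (l := l)⟩

lemma chain_dropLast :
    ∀ (l : List α) (a : α), List.Chain r a l → List.Chain r a l.dropLast := by
  intro l
  induction l with
  | nil => simp
  | cons b l ih =>
    intro a hc
    rw [chain_cons_iff] at hc
    cases l with
    | nil => simp [List.Chain.nil]
    | cons c l' =>
      rw [List.dropLast_cons₂]
      exact chain_cons_iff.mpr ⟨hc.1, ih b hc.2⟩

lemma mem_closed_walk_tg {l : List α} {a : α}
    (hc : List.Chain r a l) (hl : l.getLast? = some a) {x : α} (hx : x ∈ a :: l) :
    Relation.TransGen r x x := by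
  rcases List.mem_cons.1 hx with rfl | hx
  · exact chain_last_tg l x x hc hl
  · obtain ⟨s, t, rfl⟩ := List.append_of_mem hx
    have hsplit := chain_split'.1 hc
    have h1 : Relation.TransGen r a x :=
      chain_last_tg _ _ _ hsplit.1 (List.getLast?_concat (l := s))
    by_cases ht : t = []
    · subst ht
      have hxa : x = a := by
        have h' := hl
        rw [List.getLast?_concat] at h'
        exact Option.some.inj h'
      subst hxa
      exact chain_last_tg _ _ _ hc hl
    · have hlt : t.getLast? = some a := by
        have h' := hl
        rw [getLast?_append_ne (by simp : (x :: t : List α) ≠ [])] at h'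
        rwa [show x :: t = [x] ++ t by simp, getLast?_append_ne ht] at h' 
      have h2 : Relation.TransGen r x a := chain_last_tg t x a hsplit.2 hlt
      exact h2.trans h1

end chains
section rp
variable {n : ℕ}

/-- The (unique) implementing edge relation for a single observation. -/
def EdgeOf (o : Obs n) (v w : Fin n × Fin n) : Prop :=
  (v = o.1 ∧ w.2 = o.1.2 ∧ w.1 ∈ o.2.1 ∧ w.1 ≠ o.1.1) ∨
  (w = o.1 ∧ v.1 = o.1.1 ∧ v.2 ∈ o.2.2 ∧ v.2 ≠ o.1.2)

/-- The mandatory revealed-preference relation of a data set. -/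
def Hrel (T : Finset (Obs n)) (v w : Fin n × Fin n) : Prop :=
  ∃ o ∈ T, EdgeOf o v w

/-- The product (subgame) of an observation, as a finset of profiles. -/
def Pr (o : Obs n) : Finset (Fin n × Fin n) := o.2.1 ×ˢ o.2.2

lemma mem_Pr {o : Obs n} {v : Fin n × Fin n} :
    v ∈ Pr o ↔ v.1 ∈ o.2.1 ∧ v.2 ∈ o.2.2 := Finset.mem_product

variable {T : Finset (Obs n)}

lemma eq_mem_Pr (hT : IsDataset T) {o : Obs n} (ho : o ∈ T) : o.1 ∈ Pr o :=
  mem_Pr.2 ⟨(hT o ho).1, (hT o ho).2⟩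

lemma edge_mem (hT : IsDataset T) {o : Obs n} (ho : o ∈ T) {v w : Fin n × Fin n}
    (h : EdgeOf o v w) : v ∈ Pr o ∧ w ∈ Pr o := by
  rcases h with ⟨h1, h2, h3, h4⟩ | ⟨h1, h2, h3, h4⟩
  · exact ⟨h1 ▸ eq_mem_Pr hT ho, mem_Pr.2 ⟨h3, h2 ▸ (hT o ho).2⟩⟩
  · exact ⟨mem_Pr.2 ⟨h2 ▸ (hT o ho).1, h3⟩, h1 ▸ eq_mem_Pr hT ho⟩

lemma comp_of_mem (hlam : Laminar T) {o o' : Obs n} (ho : o ∈ T) (ho' : o' ∈ T)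
    {x : Fin n × Fin n} (hx : x ∈ Pr o) (hx' : x ∈ Pr o') :
    Pr o ⊆ Pr o' ∨ Pr o' ⊆ Pr o := by
  by_contra hcon
  push_neg at hcon
  exact hlam o ho o' ho' ⟨⟨x, Finset.mem_inter.2 ⟨hx, hx'⟩⟩, hcon.1, hcon.2⟩

/-- Confinement: any nonempty walk in `Hrel T` is contained in the product of a single
observation whose observed choice lies on the walk. -/
lemma confine (hT : IsDataset T) (hlam : Laminar T) :
    ∀ (l : List (Fin n × Fin n)) (a : Fin n × Fin n), l ≠ [] →
      List.Chain (Hrel T) a l →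
      ∃ o ∈ T, o.1 ∈ a :: l ∧ ∀ x ∈ a :: l, x ∈ Pr o := by
  intro l
  induction l with
  | nil => simp
  | cons b l ih =>
    intro a _ hc
    rw [chain_cons_iff] at hc
    obtain ⟨o', ho', he⟩ := hc.1
    have hv := edge_mem hT ho' he
    have heq : a = o'.1 ∨ b = o'.1 := by
      rcases he with ⟨h1, _⟩ | ⟨h1, _⟩
      · exact Or.inl h1
      · exact Or.inr h1
    cases l with
    | nil =>
      refine ⟨o', ho', ?_, ?_⟩
      · rcases heq with h | h
        · exact h ▸ List.mem_cons_self
        · exact List.mem_cons_of_mem _ (h ▸ List.mem_cons_self)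
      · intro x hx
        rcases List.mem_cons.1 hx with rfl | hx
        · exact hv.1
        · rcases List.mem_cons.1 hx with rfl | hx
          · exact hv.2
          · simp at hx
    | cons c l' =>
      obtain ⟨oh, hoh, hmem, hall⟩ := ih b (by simp) hc.2
      have hb' : b ∈ Pr oh := hall b (List.mem_cons_self)
      rcases comp_of_mem hlam ho' hoh hv.2 hb' with hsub | hsub
      · refine ⟨oh, hoh, List.mem_cons_of_mem _ hmem, ?_⟩
        intro x hx
        rcases List.mem_cons.1 hx with rfl | hx
        · exact hsub hv.1
        · exact hall x hx
      · refine ⟨o', ho', ?_, ?_⟩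
        · rcases heq with h | h
          · exact h ▸ List.mem_cons_self
          · exact List.mem_cons_of_mem _ (h ▸ List.mem_cons_self)
        · intro x hx
          rcases List.mem_cons.1 hx with rfl | hx
          · exact hv.1
          · exact hsub (hall x hx)

/-- The mandatory revealed-preference relation of a laminar data set with the uniqueness
property is acyclic. -/
lemma Hrel_acyclic (hT : IsDataset T) (hlam : Laminar T) (huniq : UniqueProp T) :
    ∀ v, ¬ Relation.TransGen (Hrel T) v v := by
  classical
  intro v hv
  -- the set of observations whose choice lies on some cycle
  set S : Finset (Obs n) :=
    T.filter (fun o => Relation.TransGen (Hrel T) o.1 o.1) with hS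
  have hSne : S.Nonempty := by
    obtain ⟨l, hne, hc, hl⟩ := tg_chain hv
    obtain ⟨o₀, ho₀, hmem, _⟩ := confine hT hlam l v hne hc
    exact ⟨o₀, Finset.mem_filter.2 ⟨ho₀, mem_closed_walk_tg hc hl hmem⟩⟩
  obtain ⟨os, hosS, hmax⟩ := Finset.exists_max_image S (fun o => (Pr o).card) hSne
  have hosT : os ∈ T := (Finset.mem_filter.1 hosS).1
  have htgs : Relation.TransGen (Hrel T) os.1 os.1 := (Finset.mem_filter.1 hosS).2
  set e : Fin n × Fin n := os.1 with hedef
  have hePr : e ∈ Pr os := eq_mem_Pr hT hosT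
  -- a minimal closed walk at e
  have hex : ∃ k : ℕ, ∃ l : List (Fin n × Fin n),
      l ≠ [] ∧ List.Chain (Hrel T) e l ∧ l.getLast? = some e ∧ l.length = k := by
    obtain ⟨l, h1, h2, h3⟩ := tg_chain htgs
    exact ⟨l.length, l, h1, h2, h3, rfl⟩
  obtain ⟨l, hne, hc, hl, hlen⟩ := Nat.find_spec hex
  -- the interior of the walk avoids e
  have hint : e ∉ l.dropLast := by
    intro hmem
    obtain ⟨s, t, hst⟩ := List.append_of_mem hmem
    have hld : l = l.dropLast ++ [e] := by
      have h1 := List.dropLast_append_getLast hne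
      have h2 : l.getLast hne = e := by
        have := List.getLast?_eq_getLast (l := l) hne ▸ hl
        exact Option.some.inj this
      rw [h2] at h1
      exact h1.symm
    have hl2 : l = s ++ e :: (t ++ [e]) := by
      rw [hld, hst]; simp
    have hsplit := (chain_split' (l₁ := s) (l₂ := t ++ [e])).1 (hl2 ▸ hc)
    have hlt : (t ++ [e]).length < Nat.find hex := by
      have : l.length = s.length + 1 + (t ++ [e]).length := by
        rw [hl2]; simp; omega
      omega
    exact Nat.find_min hex hlt ⟨t ++ [e], by simp, hsplit.2, List.getLast?_concat (l := t), rfl⟩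
  -- key uniqueness step
  have key : ∀ o' ∈ T, o'.1 ∈ e :: l → e ∈ Pr o' → o'.1 = e := by
    intro o' ho' hmem hePr'
    have htg : Relation.TransGen (Hrel T) o'.1 o'.1 := mem_closed_walk_tg hc hl hmem
    have hS' : o' ∈ S := Finset.mem_filter.2 ⟨ho', htg⟩
    have hcard := hmax o' hS'
    have hsub : Pr o' ⊆ Pr os := by
      rcases comp_of_mem hlam ho' hosT hePr' hePr with h | h
      · exact h
      · exact le_of_eq (Finset.eq_of_subset_of_card_le h hcard).symm
    exact huniq.2 os hosT o' ho' hsub hePr'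
  -- first edge analysis
  obtain ⟨w, l₂, rfl⟩ : ∃ w l₂, l = w :: l₂ := by
    cases l with
    | nil => exact absurd rfl hne
    | cons w l₂ => exact ⟨w, l₂, rfl⟩
  rw [chain_cons_iff] at hc
  obtain ⟨o₁, ho₁, hE₁⟩ := hc.1
  have hcfull : List.Chain (Hrel T) e (w :: l₂) := chain_cons_iff.2 hc
  have hw : w.2 = e.2 ∧ w.1 ≠ e.1 := by
    rcases hE₁ with ⟨h1, h2, h3, h4⟩ | ⟨h1, h2, h3, h4⟩
    · exact ⟨h2 ▸ congrArg Prod.snd h1.symm, fun hh => h4 (hh.trans (congrArg Prod.fst h1.symm).symm)⟩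
    · exfalso
      have hePr1 : e ∈ Pr o₁ := mem_Pr.2 ⟨h2 ▸ (hT o₁ ho₁).1, h3⟩
      have hmem1 : o₁.1 ∈ e :: w :: l₂ :=
        List.mem_cons_of_mem _ (h1 ▸ List.mem_cons_self)
      have := key o₁ ho₁ hmem1 hePr1
      exact h4 (by rw [this])
  -- l₂ ≠ []
  have hl₂ne : l₂ ≠ [] := by
    intro h
    subst h
    have : w = e := by
      simpa using hl
    exact hw.2 (congrArg Prod.fst this)
  -- the last vertex u of the interior
  set m : List (Fin n × Fin n) := (w :: l₂).dropLast with hm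
  have hmne : m ≠ [] := by
    cases l₂ with
    | nil => exact absurd rfl hl₂ne
    | cons c l₃ => simp [hm, List.dropLast_cons₂]
  set u : Fin n × Fin n := m.getLast hmne with hu
  have humem : u ∈ m := List.getLast_mem hmne
  have hmsub : ∀ x ∈ m, x ∈ (w :: l₂) := fun x hx => (List.dropLast_sublist _).mem hx
  -- last edge: H u e
  have hlast : Hrel T u e := by
    have hld : (w :: l₂) = m ++ [e] := by
      have h1 := List.dropLast_append_getLast (l := w :: l₂) (by simp)
      have h2 : (w :: l₂).getLast (by simp) = e := by
        have := List.getLast?_eq_getLast (l := w :: l₂) (by simp) ▸ hl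
        exact Option.some.inj this
      rw [h2] at h1
      exact h1.symm
    have hmd : m = m.dropLast ++ [u] := by
      have h1 := List.dropLast_append_getLast hmne
      exact h1.symm
    have hl3 : (w :: l₂) = m.dropLast ++ u :: [e] := by
      rw [hld, hmd]; simp
    have := (chain_split' (l₁ := m.dropLast) (l₂ := [e])).1 (hl3 ▸ hcfull)
    rw [chain_cons_iff] at this
    exact this.2.1
  obtain ⟨o₂, ho₂, hE₂⟩ := hlast
  have hu1 : u.1 = e.1 := by
    rcases hE₂ with ⟨h1, h2, h3, h4⟩ | ⟨h1, h2, h3, h4⟩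
    · exfalso
      have hePr2 : e ∈ Pr o₂ := mem_Pr.2 ⟨h3, h2 ▸ (hT o₂ ho₂).2⟩
      have hmem2 : o₂.1 ∈ e :: w :: l₂ :=
        List.mem_cons_of_mem _ (h1 ▸ hmsub u humem)
      have := key o₂ ho₂ hmem2 hePr2
      exact h4 (by rw [this])
    · exact h2.trans (congrArg Prod.fst h1.symm)
  -- the segment from w to u
  have hcm : List.Chain (Hrel T) e m := chain_dropLast _ _ hcfull
  have hmw : ∃ rest, m = w :: rest := by
    cases l₂ with
    | nil => exact absurd rfl hl₂ne
    | cons c l₃ => exact ⟨(c :: l₃).dropLast, by simp [hm, List.dropLast_cons₂]⟩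
  obtain ⟨rest, hrest⟩ := hmw
  have hrestne : rest ≠ [] := by
    intro h
    rw [h] at hrest
    have : u = w := by
      rw [hu]
      simp [hrest]
    exact hw.2 (this ▸ hu1)
  have hcw : List.Chain (Hrel T) w rest := by
    have := hrest ▸ hcm
    rw [chain_cons_iff] at this
    exact this.2
  obtain ⟨oh, hohT, hohmem, hohall⟩ := confine hT hlam rest w hrestne hcw
  -- derive e ∈ Pr oh
  have hwoh : w ∈ Pr oh := hohall w (List.mem_cons_self)
  have huoh : u ∈ Pr oh := by
    refine hohall u ?_
    rw [← hrest]
    exact humem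
  have heoh : e ∈ Pr oh :=
    mem_Pr.2 ⟨hu1 ▸ (mem_Pr.1 huoh).1, hw.1 ▸ (mem_Pr.1 hwoh).2⟩
  have hohmem' : oh.1 ∈ e :: w :: l₂ := by
    refine List.mem_cons_of_mem _ ?_
    exact hmsub oh.1 (hrest ▸ hohmem)
  have := key oh hohT hohmem' heoh
  -- but oh.1 is in the interior, which avoids e
  apply hint
  rw [← this] at *
  exact hrest ▸ hohmem

end rp
section potential
variable {n : ℕ} (T : Finset (Obs n))

open Classical in
/-- Potential: number of profiles reachable from `v` in the mandatory relation. -/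
noncomputable def pot (v : Fin n × Fin n) : ℝ :=
  ((Finset.univ.filter (fun w => Relation.TransGen (Hrel T) v w)).card : ℝ)

variable {T}

lemma pot_lt (hT : IsDataset T) (hlam : Laminar T) (huniq : UniqueProp T)
    {v w : Fin n × Fin n} (h : Hrel T v w) : pot T w < pot T v := by
  classical
  have hsub : (Finset.univ.filter (fun x => Relation.TransGen (Hrel T) w x)) ⊂
      (Finset.univ.filter (fun x => Relation.TransGen (Hrel T) v x)) := by
    constructor
    · intro x hx
      simp only [Finset.mem_filter, Finset.mem_univ, true_and] at hx ⊢
      exact (Relation.TransGen.single h).trans hx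
    · intro hcon
      have hwv : w ∈ Finset.univ.filter (fun x => Relation.TransGen (Hrel T) v x) :=
        Finset.mem_filter.2 ⟨Finset.mem_univ _, Relation.TransGen.single h⟩
      have := hcon hwv
      simp only [Finset.mem_filter, Finset.mem_univ, true_and] at this
      exact Hrel_acyclic hT hlam huniq w this
  have := Finset.card_lt_card hsub
  unfold pot
  exact_mod_cast this

end potential

/-- If `T` is a laminar data set satisfying the uniqueness property in
which no two distinct observations have the same observed choice, then there exists an
acyclic revealed-preference graph that strongly implements `T`. -/
theorem laminar_acyclic_rp_graph (n : ℕ) (T : Finset (Obs n)) (hT : IsDataset T)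
    (hlam : Laminar T) (huniq : UniqueProp T)
    (hinj : ∀ o ∈ T, ∀ o' ∈ T, o.1 = o'.1 → o = o') :
    ∃ G : Fin n × Fin n → Fin n × Fin n → Prop,
      IsRPGraph G ∧ Acyclic G ∧ StronglyImplements G T := by
  classical
  set φ : Fin n × Fin n → ℝ := pot T with hφ
  refine ⟨fun v w => ((v.1 = w.1 ∧ v.2 ≠ w.2) ∨ (v.2 = w.2 ∧ v.1 ≠ w.1)) ∧ φ w < φ v,
    ?_, ?_, ?_, ?_⟩
  · -- RP graph
    intro v w h
    exact h.1
  · -- acyclic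
    intro v hv
    have hdec : ∀ a b, Relation.TransGen
        (fun v w => ((v.1 = w.1 ∧ v.2 ≠ w.2) ∨ (v.2 = w.2 ∧ v.1 ≠ w.1)) ∧ φ w < φ v)
        a b → φ b < φ a := by
      intro a b h
      induction h with
      | single h => exact h.2
      | tail _ h ih => exact lt_trans h.2 ih
    exact lt_irrefl _ (hdec v v hv)
  · -- implements
    intro o ho
    constructor
    · intro i' hi' hne
      refine ⟨Or.inr ⟨rfl, Ne.symm hne⟩, ?_⟩
      exact pot_lt hT hlam huniq ⟨o, ho, Or.inl ⟨rfl, rfl, hi', hne⟩⟩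
    · intro j' hj' hne
      refine ⟨Or.inl ⟨rfl, hne⟩, ?_⟩
      exact pot_lt hT hlam huniq ⟨o, ho, Or.inr ⟨rfl, rfl, hj', hne⟩⟩
  · -- strong implementation extra condition
    intro o ho i' hi' j' hj' hne
    obtain ⟨hiI, hjJ⟩ := hT o ho
    by_cases h1 : i' = o.1.1
    · subst h1
      have hj'ne : j' ≠ o.1.2 := fun hh => hne (Prod.ext rfl hh)
      refine Or.inr ⟨o.1.2, hjJ, Ne.symm hj'ne, Or.inl ⟨rfl, hj'ne⟩, ?_⟩
      exact pot_lt hT hlam huniq ⟨o, ho, Or.inr ⟨rfl, rfl, hj', hj'ne⟩⟩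
    · by_cases h2 : j' = o.1.2
      · subst h2
        refine Or.inl ⟨o.1.1, hiI, fun hh => h1 hh.symm, Or.inr ⟨rfl, fun hh => h1 hh.symm⟩, ?_⟩
        exact pot_lt hT hlam huniq ⟨o, ho, Or.inl ⟨rfl, rfl, hi', h1⟩⟩
      · by_contra hcon
        push_neg at hcon
        obtain ⟨hL, hR⟩ := hcon
        have hA := hL o.1.1 hiI (fun hh => h1 hh.symm)
        have hB := hR o.1.2 hjJ (fun hh => h2 hh.symm)
        -- hA : ¬ G (o.1.1, j') (i', j'), shape holds, so φ(i',j') ≥ φ(o.1.1,j')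
        have e1 : ¬ φ (i', j') < φ (o.1.1, j') := by
          intro hlt
          exact absurd hlt (not_lt.2 (hA (Or.inr ⟨rfl, fun hh => h1 hh.symm⟩)))
        have e2 : ¬ φ (i', o.1.2) < φ (i', j') := by
          intro hlt
          exact absurd hlt (not_lt.2 (hB (Or.inl ⟨rfl, h2⟩)))
        push_neg at e1 e2
        have hedge3 : Hrel T (o.1.1, j') o.1 := ⟨o, ho, Or.inr ⟨rfl, rfl, hj', h2⟩⟩
        have e3 : φ o.1 < φ (o.1.1, j') := pot_lt hT hlam huniq hedge3
        have hedge4 : Hrel T o.1 (i', o.1.2) := ⟨o, ho, Or.inl ⟨rfl, rfl, hi', h1⟩⟩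
        have e4 : φ (i', o.1.2) < φ o.1 := pot_lt hT hlam huniq hedge4
        linarith
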